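/- For every integer n ≥ 1, the Bost–Connes map ρₙ on the group algebra A = ℚ[ℚ/ℤ] is multiplicative: ρₙ(x·y) = ρₙ(x)·ρₙ(y) for all x, y ∈ A. (Together with its ℚ-linearity this makes ρₙ a non-unital ℚ-algebra endomorphism of A.) -/

import Mathlib

open AddMonoidAlgebra

/-- The rational group algebra `A = ℚ[ℚ/ℤ]` of `ℚ/ℤ = AddCircle (1 : ℚ)`. -/
abbrev BC.A : Type := AddMonoidAlgebra ℚ (AddCircle (1 : ℚ))

/-- The Bost–Connes map `ρₙ : A → A`, the `ℚ`-linear map determined on the canonical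
basis elements `e_r = single r 1` by `ρₙ(e_r) = (1/n) ∑_{s : n • s = r} e_s`, the
(finite) sum running over the `n` solutions `s ∈ ℚ/ℤ` of `n • s = r`. -/
noncomputable def BC.rho (n : ℕ) : BC.A →ₗ[ℚ] BC.A :=
  (Finsupp.lift BC.A ℚ (AddCircle (1 : ℚ)) fun r =>
    (n : ℚ)⁻¹ • ∑ᶠ (s : AddCircle (1 : ℚ)) (_ : n • s = r), AddMonoidAlgebra.single s (1 : ℚ)) ∘ₗ
    (AddMonoidAlgebra.coeffLinearEquiv ℚ).toLinearMap

namespace BC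

local notation "Q" => AddCircle (1 : ℚ)

lemma intCast_coe_eq_zero (m : ℤ) : (((m : ℚ) : ℚ) : Q) = 0 := by
  rw [AddCircle.coe_eq_zero_iff]
  exact ⟨m, by simp⟩

lemma exists_nsmul_eq (n : ℕ) (hn : 0 < n) (r : Q) : ∃ s₀ : Q, n • s₀ = r := by
  refine ⟨DivisibleBy.div r (n : ℤ), ?_⟩
  have h := DivisibleBy.div_cancel (α := ℤ) r (n := (n : ℤ)) (by exact_mod_cast hn.ne')
  rwa [natCast_zsmul] at h

/-- The explicit finset of solutions of `n • s = n • s₀`. -/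
noncomputable def fib (n : ℕ) (s₀ : Q) : Finset Q :=
  (Finset.range n).image fun k : ℕ => s₀ + ((((k : ℕ) : ℚ) / (n : ℚ) : ℚ) : Q)

lemma mem_fib {n : ℕ} (hn : 0 < n) (s₀ s : Q) :
    s ∈ fib n s₀ ↔ n • s = n • s₀ := by
  have hn' : (n : ℚ) ≠ 0 := by exact_mod_cast hn.ne'
  constructor
  · rintro hs
    simp only [fib, Finset.mem_image, Finset.mem_range] at hs
    obtain ⟨k, hk, rfl⟩ := hs
    have : (n : ℕ) • ((((k : ℚ) / (n : ℚ) : ℚ) : Q)) = 0 := by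
      rw [← AddCircle.coe_nsmul, nsmul_eq_mul, mul_div_cancel₀ _ hn']
      exact_mod_cast intCast_coe_eq_zero (k : ℤ)
    rw [smul_add, this, add_zero]
  · intro hs
    obtain ⟨q, hq⟩ := QuotientAddGroup.mk_surjective (s - s₀)
    have h0 : (n : ℕ) • ((q : Q)) = 0 := by
      rw [hq, smul_sub, hs, sub_self]
    rw [← AddCircle.coe_nsmul, AddCircle.coe_eq_zero_iff] at h0
    obtain ⟨m, hm⟩ := h0
    have hm' : (m : ℚ) = (n : ℚ) * q := by
      rw [nsmul_eq_mul] at hm; rw [← hm]; simp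
    have hqm : q = (m : ℚ) / n := by rw [hm', mul_div_cancel_left₀ _ hn']
    refine Finset.mem_image.mpr ⟨(m % (n : ℤ)).toNat, ?_, ?_⟩
    · have hnz : (n : ℤ) ≠ 0 := by exact_mod_cast hn.ne'
      rw [Finset.mem_range, ← Int.ofNat_lt, Int.toNat_of_nonneg (Int.emod_nonneg _ hnz)]
      exact_mod_cast Int.emod_lt_of_pos m (by exact_mod_cast hn)
    · have hnz : (n : ℤ) ≠ 0 := by exact_mod_cast hn.ne'
      have hk : ((((m % (n : ℤ)).toNat : ℚ)) : ℚ) = ((m % (n : ℤ) : ℤ) : ℚ) := by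
        norm_cast
        exact Int.toNat_of_nonneg (Int.emod_nonneg _ hnz)
      have key : ((((m % (n : ℤ)).toNat : ℚ) / (n : ℚ) : ℚ) : Q) = ((q : ℚ) : Q) := by
        rw [hk, hqm]
        have hsplit : (m : ℚ) / n - ((m % (n : ℤ) : ℤ) : ℚ) / n = ((m / (n : ℤ) : ℤ) : ℚ) := by
          have hz : m - m % (n : ℤ) = (n : ℤ) * (m / (n : ℤ)) := by
            have := Int.mul_ediv_add_emod m (n : ℤ); omega
          have hq2 : (m : ℚ) - ((m % (n : ℤ) : ℤ) : ℚ) = (n : ℚ) * ((m / (n : ℤ) : ℤ) : ℚ) := by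
            exact_mod_cast hz
          rw [div_sub_div_same, hq2, mul_div_cancel_left₀ _ hn']
        have := intCast_coe_eq_zero (m / (n : ℤ))
        have heq : ((m : ℚ) / n : ℚ) = ((m % (n : ℤ) : ℤ) : ℚ) / n + ((m / (n : ℤ) : ℤ) : ℚ) := by
          linarith [hsplit]
        rw [heq, AddCircle.coe_add, this, add_zero]
      rw [key, hq]
      abel

lemma card_fib {n : ℕ} (hn : 0 < n) (s₀ : Q) : (fib n s₀).card = n := by
  have hn' : (n : ℚ) ≠ 0 := by exact_mod_cast hn.ne'
  rw [fib, Finset.card_image_of_injOn, Finset.card_range]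
  intro k hk j hj h
  rw [Finset.coe_range, Set.mem_Iio] at hk hj
  have h1 : ((((k : ℚ) - (j : ℚ)) / (n : ℚ) : ℚ) : Q) = 0 := by
    have : ((k : ℚ) - (j : ℚ)) / n = (k : ℚ) / n - (j : ℚ) / n := by ring
    rw [this, AddCircle.coe_sub]
    have h2 : ((((k : ℕ) : ℚ) / (n : ℚ) : ℚ) : Q) = ((((j : ℕ) : ℚ) / (n : ℚ) : ℚ) : Q) :=
      add_left_cancel h
    rw [h2, sub_self]
  rw [AddCircle.coe_eq_zero_iff] at h1
  obtain ⟨m, hm⟩ := h1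
  have hm' : (m : ℚ) * n = (k : ℚ) - j := by
    rw [zsmul_eq_mul, mul_one] at hm
    rw [hm, div_mul_cancel₀ _ hn']
  have hint : (k : ℤ) - (j : ℤ) = (n : ℤ) * m := by
    exact_mod_cast (show ((k : ℚ)) - (j : ℚ) = (n : ℚ) * (m : ℚ) by linarith [hm'])
  have : ((k : ℤ) - (j : ℤ)) = 0 := by
    refine Int.eq_zero_of_abs_lt_dvd ⟨m, hint⟩ ?_
    rw [abs_sub_lt_iff]
    constructor <;> omega
  omega

lemma fib_congr {n : ℕ} (hn : 0 < n) {a b : Q} (h : n • a = n • b) : fib n a = fib n b :=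
  Finset.ext fun u => by rw [mem_fib hn, mem_fib hn, h]

lemma image_add_fib {n : ℕ} (hn : 0 < n) (s t₀ : Q) :
    (fib n t₀).image (fun t => s + t) = fib n (s + t₀) := by
  ext u
  simp only [Finset.mem_image, mem_fib hn, smul_add]
  constructor
  · rintro ⟨t, ht, rfl⟩; rw [smul_add, ht]
  · intro hu
    exact ⟨u - s, by rw [smul_sub, hu]; abel, by abel⟩

lemma finsum_fib {n : ℕ} (hn : 0 < n) (s₀ : Q) :
    (∑ᶠ (s : Q) (_ : n • s = n • s₀), AddMonoidAlgebra.single s (1 : ℚ)) =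
      ∑ s ∈ fib n s₀, AddMonoidAlgebra.single s (1 : ℚ) := by
  have hset : {s : Q | n • s = n • s₀} = ↑(fib n s₀) :=
    Set.ext fun s => by rw [Set.mem_setOf_eq, Finset.mem_coe, mem_fib hn]
  calc (∑ᶠ (s : Q) (_ : n • s = n • s₀), AddMonoidAlgebra.single s (1 : ℚ))
      = ∑ᶠ s ∈ {s : Q | n • s = n • s₀}, AddMonoidAlgebra.single s (1 : ℚ) := rfl
    _ = ∑ᶠ s ∈ (↑(fib n s₀) : Set Q), AddMonoidAlgebra.single s (1 : ℚ) := by rw [hset]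
    _ = ∑ s ∈ fib n s₀, AddMonoidAlgebra.single s (1 : ℚ) := finsum_mem_coe_finset _ _

lemma rho_single (n : ℕ) (r : Q) (c : ℚ) :
    BC.rho n (AddMonoidAlgebra.single r c) =
      c • ((n : ℚ)⁻¹ • ∑ᶠ (s : Q) (_ : n • s = r), AddMonoidAlgebra.single s (1 : ℚ)) := by
  rw [BC.rho, LinearMap.comp_apply, LinearEquiv.coe_coe, AddMonoidAlgebra.coeffLinearEquiv_apply,
    AddMonoidAlgebra.coeff_single]
  erw [Finsupp.lift_apply]
  rw [Finsupp.sum_single_index (by rw [zero_smul])]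

lemma rho_single_mul {n : ℕ} (hn : 0 < n) (r r' : Q) :
    BC.rho n (AddMonoidAlgebra.single r (1 : ℚ) * AddMonoidAlgebra.single r' (1 : ℚ)) =
      BC.rho n (AddMonoidAlgebra.single r (1 : ℚ)) *
        BC.rho n (AddMonoidAlgebra.single r' (1 : ℚ)) := by
  have hn' : (n : ℚ) ≠ 0 := by exact_mod_cast hn.ne'
  obtain ⟨s₀, rfl⟩ := exists_nsmul_eq n hn r
  obtain ⟨t₀, rfl⟩ := exists_nsmul_eq n hn r'
  rw [AddMonoidAlgebra.single_mul_single, one_mul]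
  rw [rho_single, rho_single, rho_single, one_smul, one_smul, one_smul]
  have h1 : n • s₀ + n • t₀ = n • (s₀ + t₀) := (smul_add n s₀ t₀).symm
  rw [h1, finsum_fib hn, finsum_fib hn, finsum_fib hn]
  rw [smul_mul_smul_comm]
  rw [Finset.sum_mul_sum]
  have hinner : ∀ s ∈ fib n s₀,
      (∑ t ∈ fib n t₀, AddMonoidAlgebra.single s (1:ℚ) * AddMonoidAlgebra.single t (1:ℚ)) =
        ∑ u ∈ fib n (s₀ + t₀), AddMonoidAlgebra.single u (1:ℚ) := by
    intro s hs
    have hs' : n • s = n • s₀ := (mem_fib hn s₀ s).mp hs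
    have hinj : Set.InjOn (fun t => s + t) (fib n t₀) := fun a _ b _ h => by
      simpa using h
    calc (∑ t ∈ fib n t₀, AddMonoidAlgebra.single s (1:ℚ) * AddMonoidAlgebra.single t (1:ℚ))
        = ∑ t ∈ fib n t₀, AddMonoidAlgebra.single (s + t) (1:ℚ) := by
          refine Finset.sum_congr rfl fun t _ => ?_
          rw [AddMonoidAlgebra.single_mul_single, one_mul]
      _ = ∑ u ∈ (fib n t₀).image (fun t => s + t), AddMonoidAlgebra.single u (1:ℚ) := by
          refine (Finset.sum_image (g := fun t => s + t)
            (f := fun u => AddMonoidAlgebra.single u (1:ℚ)) ?_).symm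
          exact fun a _ b _ h => by simpa using h
      _ = ∑ u ∈ fib n (s₀ + t₀), AddMonoidAlgebra.single u (1:ℚ) := by
          rw [image_add_fib hn, fib_congr hn (show n • (s + t₀) = n • (s₀ + t₀) by
            rw [smul_add, smul_add, hs'])]
  rw [Finset.sum_congr rfl hinner, Finset.sum_const, card_fib hn,
    ← Nat.cast_smul_eq_nsmul ℚ, smul_smul]
  congr 1
  field_simp

end BC

/-- For every `n ≥ 1`, the Bost–Connes map `ρₙ` on `ℚ[ℚ/ℤ]` is multiplicative. -/
theorem BC.rho_mul (n : ℕ) (hn : 1 ≤ n) (x y : BC.A) :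
    BC.rho n (x * y) = BC.rho n x * BC.rho n y := by
  have hn0 : 0 < n := hn
  induction x using AddMonoidAlgebra.induction_linear with
  | zero => simp
  | add f g hf hg => rw [add_mul, map_add, map_add, add_mul, hf, hg]
  | single a b =>
    induction y using AddMonoidAlgebra.induction_linear with
    | zero => simp
    | add f g hf hg => rw [mul_add, map_add, map_add, mul_add, hf, hg]
    | single a' b' =>
      show BC.rho n (AddMonoidAlgebra.single a b * AddMonoidAlgebra.single a' b') =
        BC.rho n (AddMonoidAlgebra.single a b) * BC.rho n (AddMonoidAlgebra.single a' b')
      have hsm : ∀ (r : AddCircle (1 : ℚ)) (c : ℚ),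
          (AddMonoidAlgebra.single r c : BC.A) = c • AddMonoidAlgebra.single r (1 : ℚ) := by
        intro r c
        rw [AddMonoidAlgebra.smul_single', mul_one]
      rw [hsm a b, hsm a' b', smul_mul_smul_comm, map_smul, map_smul, map_smul,
        BC.rho_single_mul hn0, smul_mul_smul_comm]
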